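/- (Kleiss–Kuijf) A polynomial w ∈ W(n-1) is a Lie polynomial if and only if for all words a, b (with a possibly empty) it satisfies (w, a1b) = (-1)^{|a|} (w, 1(ā ⧢ b)), where ā is the reversal of a. -/

import Mathlib

open scoped BigOperators

/-- `Wd m` : the algebra of formal ℚ-linear combinations of words in letters `x_1,…,x_m`
(represented as `Fin m`), with concatenation product. -/
abbrev Wd (m : ℕ) := MonoidAlgebra ℚ (FreeMonoid (Fin m))

/-- The word monomial associated to a list of letters. -/
noncomputable def word {m : ℕ} (l : List (Fin m)) : Wd m :=
  MonoidAlgebra.single (FreeMonoid.ofList l) 1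

/-- All interleavings (shuffles) of two lists. -/
def shuffles {α : Type*} : List α → List α → List (List α)
  | [], bs => [bs]
  | a :: as, [] => [a :: as]
  | a :: as, b :: bs =>
      (shuffles as (b :: bs)).map (a :: ·) ++ (shuffles (a :: as) bs).map (b :: ·)

/-- The shuffle product of two words, as an element of `Wd m`. -/
noncomputable def shuffleProd {m : ℕ} (a b : List (Fin m)) : Wd m :=
  ((shuffles a b).map word).sum

/-- Binary trees representing iterated commutators (Lie monomials). -/
inductive LieTree (m : ℕ) where
  | leaf : Fin m → LieTree m
  | node : LieTree m → LieTree m → LieTree m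

/-- Expansion of a Lie monomial in the word algebra, via `[u,v] = uv - vu`. -/
noncomputable def LieTree.expand {m : ℕ} : LieTree m → Wd m
  | .leaf i => word [i]
  | .node u v => u.expand * v.expand - v.expand * u.expand

/-- The list of leaf labels of a Lie tree, read left to right. -/
def LieTree.leaves {m : ℕ} : LieTree m → List (Fin m)
  | .leaf i => [i]
  | .node u v => u.leaves ++ v.leaves

/-- `Lie(m)` : the span of the multilinear Lie monomials (each letter used exactly once). -/
noncomputable def LieSub (m : ℕ) : Submodule ℚ (Wd m) :=
  Submodule.span ℚ
    {x | ∃ T : LieTree m, T.leaves.Perm (List.finRange m) ∧ x = LieTree.expand T}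

/-- `W(m)` : the span of the multilinear words (each letter used exactly once). -/
noncomputable def Wsub (m : ℕ) : Submodule ℚ (Wd m) :=
  Submodule.span ℚ {x | ∃ l : List (Fin m), l.Perm (List.finRange m) ∧ x = word l}

/-- `Sh(m)` : the span of nontrivial shuffles of multilinear words. -/
noncomputable def ShSub (m : ℕ) : Submodule ℚ (Wd m) :=
  Submodule.span ℚ
    {x | ∃ a b : List (Fin m), a ≠ [] ∧ b ≠ [] ∧ (a ++ b).Perm (List.finRange m) ∧
      x = shuffleProd a b}

/-- The left-nested comb `Γ_{1a} = [...[[x_1, a_1], a_2], …]` (the letter `x_1` is `0`). -/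
def comb {m : ℕ} [NeZero m] (a : List (Fin m)) : LieTree m :=
  a.foldl (fun t i => LieTree.node t (LieTree.leaf i)) (LieTree.leaf 0)

/-- The finset of permutations of the letters `x_2,…,x_m` (i.e. of `(finRange m).tail`). -/
noncomputable def permsTail (m : ℕ) : Finset (List (Fin m)) :=
  ((List.finRange m).tail).permutations.toFinset

/-! ### Auxiliary lemmas for the Kleiss–Kuijf theorem -/

namespace KKAux

variable {α : Type*}

/-! #### Combinatorics of `shuffles` -/

@[simp] lemma shuffles_nil_left (b : List α) : shuffles [] b = [b] := by
  cases b <;> simp [shuffles]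

@[simp] lemma shuffles_nil_right (a : List α) : shuffles a [] = [a] := by
  cases a <;> simp [shuffles]

lemma shuffles_cons_cons (x y : α) (as bs : List α) :
    shuffles (x :: as) (y :: bs) =
      (shuffles as (y :: bs)).map (x :: ·) ++ (shuffles (x :: as) bs).map (y :: ·) := by
  simp [shuffles]

lemma mem_shuffles_perm : ∀ (a b c : List α), c ∈ shuffles a b → c.Perm (a ++ b)
  | [], b, c, h => by rw [shuffles_nil_left] at h; simp_all
  | a :: as, [], c, h => by rw [shuffles_nil_right] at h; simp_all
  | a :: as, b :: bs, c, h => by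
      rw [shuffles_cons_cons] at h
      rcases List.mem_append.1 h with h | h <;> rcases List.mem_map.1 h with ⟨d, hd, rfl⟩
      · exact (mem_shuffles_perm _ _ _ hd).cons a
      · refine ((mem_shuffles_perm _ _ _ hd).cons b).trans ?_
        exact (List.perm_middle).symm

lemma ins (x y : α) : ∀ (q : List α),
    (shuffles [x] (q ++ [y])).Perm ((q ++ [y, x]) :: (shuffles [x] q).map (· ++ [y]))
  | [] => by simp [shuffles_cons_cons]; exact List.Perm.swap _ _ _
  | z :: q' => by
      have IH := ins x y q'
      rw [show (z :: q') ++ [y] = z :: (q' ++ [y]) from rfl, shuffles_cons_cons,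
        shuffles_nil_left]
      refine ((IH.map (z :: ·)).append_left _).trans ?_
      rw [shuffles_cons_cons, shuffles_nil_left]
      simp only [List.map_map, List.map_append, List.map_cons, Function.comp_def,
        List.singleton_append, List.map_nil, List.cons_append, List.nil_append]
      exact List.Perm.swap _ _ _

lemma ins' (x y : α) : ∀ (p : List α),
    (shuffles (p ++ [x]) [y]).Perm ((p ++ [x, y]) :: (shuffles p [y]).map (· ++ [x]))
  | [] => by simp [shuffles_cons_cons]
  | z :: p' => by
      have IH := ins' x y p'
      rw [show (z :: p') ++ [x] = z :: (p' ++ [x]) from rfl, shuffles_cons_cons,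
        shuffles_nil_right]
      refine ((IH.map (z :: ·)).append_right _).trans ?_
      rw [shuffles_cons_cons, shuffles_nil_right]
      simp only [List.map_map, List.map_append, List.map_cons, Function.comp_def,
        List.singleton_append, List.map_nil, List.cons_append, List.nil_append]
      exact List.Perm.refl _

lemma SN : ∀ (p q : List α) (x y : α),
    (shuffles (p ++ [x]) (q ++ [y])).Perm
      ((shuffles p (q ++ [y])).map (· ++ [x]) ++ (shuffles (p ++ [x]) q).map (· ++ [y]))
  | [], q, x, y => by
      rw [List.nil_append, shuffles_nil_left]
      refine (ins x y q).trans ?_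
      simp only [List.map_cons, List.map_nil, List.singleton_append, List.append_assoc]
      rfl
  | w :: p', [], x, y => by
      rw [shuffles_nil_right]
      refine (ins' x y (w :: p')).trans ?_
      refine (List.Perm.cons _ (List.Perm.refl _)).trans ?_
      simp only [List.map_cons, List.map_nil, List.append_assoc]
      exact (List.perm_append_singleton _ _).symm.trans (List.Perm.refl _)
  | w :: p', z :: q', x, y => by
      have IH1 := SN p' (z :: q') x y
      have IH2 := SN (w :: p') q' x y
      rw [show (w :: p') ++ [x] = w :: (p' ++ [x]) from rfl,
        show (z :: q') ++ [y] = z :: (q' ++ [y]) from rfl, shuffles_cons_cons]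
      refine ((IH1.map (w :: ·)).append ((IH2.map (z :: ·)))).trans ?_
      rw [show shuffles (w :: p') (z :: (q' ++ [y])) =
            (shuffles p' (z :: (q' ++ [y]))).map (w :: ·) ++
              (shuffles (w :: p') (q' ++ [y])).map (z :: ·) from shuffles_cons_cons _ _ _ _,
          show shuffles (w :: (p' ++ [x])) (z :: q') =
            (shuffles (p' ++ [x]) (z :: q')).map (w :: ·) ++
              (shuffles (w :: (p' ++ [x])) q').map (z :: ·) from shuffles_cons_cons _ _ _ _]
      simp only [List.map_append, List.map_map, Function.comp_def, List.cons_append,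
        ← List.append_assoc]
      refine List.Perm.append_right _ ?_
      simp only [List.append_assoc]
      exact (List.perm_append_comm.append_left _)
  termination_by p q => p.length + q.length

section Count

variable [DecidableEq α]

lemma append_singleton_injective (x : α) :
    Function.Injective (· ++ [x] : List α → List α) := by
  intro a b h
  simpa using List.append_inj_left' h rfl

lemma count_map_append_singleton_same (L : List (List α)) (c : List α) (x : α) :
    (L.map (· ++ [x])).count (c ++ [x]) = L.count c := by
  induction L with
  | nil => rfl
  | cons d L ih =>
      simp [List.count_cons, ih, (append_singleton_injective x).eq_iff]

lemma count_map_append_singleton_ne (L : List (List α)) (c : List α) {x i : α} (h : x ≠ i) :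
    (L.map (· ++ [x])).count (c ++ [i]) = 0 := by
  rw [List.count_eq_zero]
  rintro hm
  rcases List.mem_map.1 hm with ⟨d, _, hd⟩
  have := congrArg List.getLast? hd
  simp [List.getLast?_concat] at this
  exact h this

lemma count_singleton_list (c d : List α) : [d].count c = if c = d then 1 else 0 := by
  rcases eq_or_ne c d with rfl | h
  · simp
  · simp [List.count_cons, h, Ne.symm h]

lemma append_singleton_ne_append_singleton {c d : List α} {i y : α} (h : y ≠ i) :
    c ++ [i] ≠ d ++ [y] := by
  intro hcd
  have := congrArg List.getLast? hcd
  simp [List.getLast?_concat] at this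
  exact h this.symm

lemma count_eq_of_perm {L₁ L₂ : List (List α)} (h : L₁.Perm L₂) (c : List α) :
    L₁.count c = L₂.count c := by
  induction h with
  | nil => rfl
  | cons d _ ih => simp [List.count_cons, ih]
  | swap d e L => simp [List.count_cons]; ring
  | trans _ _ ih₁ ih₂ => rw [ih₁, ih₂]

lemma count_shuffles_snoc (p b : List α) (x y : α) (c : List α) (i : α) :
    (shuffles (p ++ [x]) (b ++ [y])).count (c ++ [i]) =
      (if x = i then (shuffles p (b ++ [y])).count c else 0) +
      (if y = i then (shuffles (p ++ [x]) b).count c else 0) := by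
  rw [count_eq_of_perm (SN p b x y), List.count_append]
  rcases eq_or_ne x i with hx | hx <;> rcases eq_or_ne y i with hy | hy
  · rw [if_pos hx, if_pos hy, hx, hy, count_map_append_singleton_same,
      count_map_append_singleton_same]
  · rw [if_pos hx, if_neg hy, hx, count_map_append_singleton_same,
      count_map_append_singleton_ne _ _ hy]
  · rw [if_neg hx, if_pos hy, hy, count_map_append_singleton_same,
      count_map_append_singleton_ne _ _ hx]
  · rw [if_neg hx, if_neg hy, count_map_append_singleton_ne _ _ hx,
      count_map_append_singleton_ne _ _ hy, add_zero]

lemma sum_map_eq_sum_count (L : List (List α)) (S : Finset (List α))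
    (hsub : ∀ c ∈ L, c ∈ S) (f : List α → ℚ) :
    (L.map f).sum = ∑ σ ∈ S, (L.count σ : ℚ) * f σ := by
  induction L with
  | nil => simp
  | cons c L ih =>
      have hc := hsub c (by simp)
      rw [List.map_cons, List.sum_cons, ih (fun d hd => hsub d (by simp [hd]))]
      have hterm : ∀ σ ∈ S, ((c :: L).count σ : ℚ) * f σ =
          (L.count σ : ℚ) * f σ + (if σ = c then f σ else 0) := by
        intro σ _
        rw [List.count_cons]
        rcases eq_or_ne σ c with rfl | h
        · simp [add_mul]
        · simp [h, Ne.symm h]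
      rw [Finset.sum_congr rfl hterm, Finset.sum_add_distrib,
        Finset.sum_ite_eq' S c f, if_pos hc]
      ring

lemma count_nil_shuffles_snoc (p : List α) (x : α) (q : List α) :
    (shuffles (p ++ [x]) q).count [] = 0 := by
  rw [List.count_eq_zero]
  intro h
  have := (mem_shuffles_perm _ _ _ h).symm
  have := this.eq_nil
  simp at this

end Count

/-! #### Sum helper lemmas -/

lemma list_map_sum_zero {β : Type*} (L : List β) :
    (L.map fun _ => (0 : ℚ)).sum = 0 := by
  induction L with
  | nil => simp
  | cons c L ih => simp [ih]

lemma list_map_sum_add {β : Type*} (L : List β) (f g : β → ℚ) :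
    (L.map fun c => f c + g c).sum = (L.map f).sum + (L.map g).sum := by
  induction L with
  | nil => simp
  | cons c L ih => simp [ih]; ring

lemma list_map_sum_mul {β : Type*} (L : List β) (q : ℚ) (f : β → ℚ) :
    (L.map fun c => q * f c).sum = q * (L.map f).sum := by
  induction L with
  | nil => simp
  | cons c L ih => simp [ih]; ring

lemma list_sum_count {β : Type*} [DecidableEq β] (L : List (List β)) (σ : List β) :
    (L.map fun c => (if σ = c then (1:ℚ) else 0)).sum = (L.count σ : ℚ) := by
  induction L with
  | nil => simp
  | cons c L ih =>
      rcases eq_or_ne σ c with rfl | h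
      · simp [List.count_cons, ih, add_comm]
      · simp [List.count_cons, ih, h, Ne.symm h]

/-! #### Algebra lemmas -/

variable {m : ℕ}

lemma wd_add_apply (x y : Wd m) (g : FreeMonoid (Fin m)) : (x + y).coeff g = x.coeff g + y.coeff g := rfl

lemma wd_smul_apply (q : ℚ) (x : Wd m) (g : FreeMonoid (Fin m)) : (q • x).coeff g = q * x.coeff g := rfl

lemma wd_zero_apply (g : FreeMonoid (Fin m)) : (0 : Wd m).coeff g = 0 := rfl

lemma wd_sum_apply {ι : Type*} (S : Finset ι) (f : ι → Wd m) (g : FreeMonoid (Fin m)) :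
    (∑ i ∈ S, f i).coeff g = ∑ i ∈ S, (f i).coeff g := by
  classical
  induction S using Finset.induction with
  | empty => simp [wd_zero_apply]
  | insert _ _ hni ih => simp [Finset.sum_insert hni, wd_add_apply, ih]

lemma word_apply (l l' : List (Fin m)) :
    (word l).coeff (FreeMonoid.ofList l') = if l = l' then 1 else 0 := by
  rcases eq_or_ne l l' with rfl | h
  · rw [if_pos rfl]
    exact Finsupp.single_eq_same
  · rw [if_neg h, word, MonoidAlgebra.single]
    exact Finsupp.single_eq_of_ne' (fun hc => h (congrArg FreeMonoid.toList hc))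

lemma mul_word_apply_last (f : Wd m) (i : Fin m) (l : List (Fin m)) :
    (f * word [i]).coeff (FreeMonoid.ofList (l ++ [i])) = f.coeff (FreeMonoid.ofList l) := by
  have H : ∀ a : FreeMonoid (Fin m),
      a * FreeMonoid.ofList [i] = FreeMonoid.ofList (l ++ [i]) ↔ a = FreeMonoid.ofList l := by
    intro a
    constructor
    · intro h
      have h' : (FreeMonoid.toList a) ++ [i] = l ++ [i] := congrArg FreeMonoid.toList h
      exact congrArg FreeMonoid.ofList (append_singleton_injective i h')
    · rintro rfl
      rfl
  simpa [word] using MonoidAlgebra.coeff_mul_single_eq_coeff_mul (x := f) (r := (1:ℚ)) _ (fun a _ => H a)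

lemma mul_word_apply_ne (f : Wd m) {i j : Fin m} (h : j ≠ i) (l : List (Fin m)) :
    (f * word [i]).coeff (FreeMonoid.ofList (l ++ [j])) = 0 := by
  rw [word]
  apply MonoidAlgebra.mul_single_apply_of_not_exists_mul
  rintro ⟨d, hd⟩
  have h' : l ++ [j] = (FreeMonoid.toList d) ++ [i] := congrArg FreeMonoid.toList hd
  have := congrArg List.getLast? h'
  simp [List.getLast?_concat] at this
  exact h this

lemma word_mul_apply_head (f : Wd m) (i : Fin m) (l : List (Fin m)) :
    (word [i] * f).coeff (FreeMonoid.ofList (i :: l)) = f.coeff (FreeMonoid.ofList l) := by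
  have H : ∀ a : FreeMonoid (Fin m),
      FreeMonoid.ofList [i] * a = FreeMonoid.ofList (i :: l) ↔ a = FreeMonoid.ofList l := by
    intro a
    constructor
    · intro h
      have h' : i :: (FreeMonoid.toList a) = i :: l := congrArg FreeMonoid.toList h
      exact congrArg FreeMonoid.ofList (List.cons_injective.eq_iff.1 h' :)
    · rintro rfl
      rfl
  simpa [word] using MonoidAlgebra.coeff_single_mul_eq_mul_coeff (x := f) (r := (1:ℚ)) _ (fun a _ => H a)

lemma word_mul_apply_ne (f : Wd m) {i j : Fin m} (h : j ≠ i) (l : List (Fin m)) :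
    (word [i] * f).coeff (FreeMonoid.ofList (j :: l)) = 0 := by
  rw [word]
  apply MonoidAlgebra.single_mul_apply_of_not_exists_mul
  rintro ⟨d, hd⟩
  have h' : j :: l = i :: (FreeMonoid.toList d) := congrArg FreeMonoid.toList hd
  exact h (by injection h')

/-! #### The comb expansion -/

variable [NeZero m]

lemma comb_append_singleton (σ : List (Fin m)) (i : Fin m) :
    comb (σ ++ [i]) = LieTree.node (comb σ) (LieTree.leaf i) := by
  simp [comb, List.foldl_append]

lemma expand_comb_append (σ : List (Fin m)) (i : Fin m) :
    (comb (σ ++ [i])).expand =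
      (comb σ).expand * word [i] - word [i] * (comb σ).expand := by
  rw [comb_append_singleton]; rfl

lemma leaves_comb (σ : List (Fin m)) : (comb σ).leaves = 0 :: σ := by
  induction σ using List.reverseRecOn with
  | nil => rfl
  | append_singleton σ i ih =>
      rw [comb_append_singleton]
      show (comb σ).leaves ++ [i] = 0 :: (σ ++ [i])
      rw [ih]; rfl

/-- The key computation: coefficients of the expansion of a left comb. -/
lemma key (σ : List (Fin m)) (hσ : (0:Fin m) ∉ σ) : ∀ (a b : List (Fin m)),
    (comb σ).expand.coeff (FreeMonoid.ofList (a ++ 0 :: b)) =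
      (-1 : ℚ) ^ a.length * ((shuffles a.reverse b).count σ : ℚ) := by
  induction σ using List.reverseRecOn with
  | nil =>
      intro a b
      show (word [0]).coeff (FreeMonoid.ofList (a ++ 0 :: b)) = _
      cases a with
      | nil =>
          cases b with
          | nil =>
              rw [word_apply]
              simp [count_singleton_list]
          | cons y b' =>
              rw [word_apply]
              simp [count_singleton_list]
      | cons x a' =>
          rw [word_apply, List.reverse_cons,
            if_neg (by simp), count_nil_shuffles_snoc]
          simp
  | append_singleton σ' i ih =>
      have hi : i ≠ 0 := by
        intro h; exact hσ (by simp [h])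
      have hσ' : (0:Fin m) ∉ σ' := fun h => hσ (by simp [h])
      replace ih := ih hσ'
      intro a b
      rw [expand_comb_append, MonoidAlgebra.coeff_sub, Finsupp.sub_apply]
      cases a with
      | nil =>
          rw [show ([] : List (Fin m)) ++ 0 :: b = 0 :: b from rfl,
            word_mul_apply_ne _ (Ne.symm hi)]
          induction b using List.reverseRecOn with
          | nil =>
              rw [show (0 : Fin m) :: [] = [] ++ [(0:Fin m)] from rfl,
                mul_word_apply_ne _ (Ne.symm hi)]
              simp [count_singleton_list]
          | append_singleton b'' y _ih =>
              rw [show (0 : Fin m) :: (b'' ++ [y]) = (0 :: b'') ++ [y] from rfl]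
              rcases eq_or_ne y i with hy | hy
              · rw [hy, mul_word_apply_last]
                have h2 := ih [] b''
                rw [show ([] : List (Fin m)) ++ 0 :: b'' = 0 :: b'' from rfl] at h2
                rw [h2]
                simp only [List.reverse_nil, shuffles_nil_left, List.length_nil, pow_zero,
                  one_mul, sub_zero, count_singleton_list,
                  (append_singleton_injective i).eq_iff]
              · rw [mul_word_apply_ne _ hy]
                simp only [List.reverse_nil, shuffles_nil_left, count_singleton_list,
                  if_neg (append_singleton_ne_append_singleton hy)]
                simp
      | cons x a' =>
          rw [List.reverse_cons]
          have hterm2 : (word [i] * (comb σ').expand).coeff (FreeMonoid.ofList (x :: a' ++ 0 :: b)) =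
              if x = i then (-1:ℚ) ^ a'.length * ((shuffles a'.reverse b).count σ' : ℚ)
              else 0 := by
            rcases eq_or_ne x i with hx | hx
            · rw [if_pos hx, hx, show (i :: a') ++ 0 :: b = i :: (a' ++ 0 :: b) from rfl,
                word_mul_apply_head, ih a' b]
            · rw [if_neg hx, show (x :: a') ++ 0 :: b = x :: (a' ++ 0 :: b) from rfl,
                word_mul_apply_ne _ hx]
          induction b using List.reverseRecOn with
          | nil =>
              have hterm1 : ((comb σ').expand * word [i]).coeff
                  (FreeMonoid.ofList (x :: a' ++ 0 :: [])) = 0 := by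
                rw [show (x :: a') ++ 0 :: [] = (x :: a') ++ [(0:Fin m)] from rfl]
                exact mul_word_apply_ne _ (Ne.symm hi) _
              rw [hterm1, hterm2, zero_sub, shuffles_nil_right, count_singleton_list,
                shuffles_nil_right, count_singleton_list]
              rcases eq_or_ne x i with hx | hx
              · rw [hx, if_pos rfl]
                rcases eq_or_ne σ' a'.reverse with he | he
                · rw [he, if_pos rfl, if_pos rfl, List.length_cons, pow_succ]
                  push_cast
                  ring
                · rw [if_neg he, if_neg (fun hcon => he (append_singleton_injective i hcon))]
                  simp
              · rw [if_neg hx, if_neg (by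
                    intro hcon
                    have := congrArg List.getLast? hcon
                    simp [List.getLast?_concat] at this
                    exact hx this.symm)]
                simp
          | append_singleton b'' y _ih =>
              have hterm1 : ((comb σ').expand * word [i]).coeff
                  (FreeMonoid.ofList (x :: a' ++ 0 :: (b'' ++ [y]))) =
                  if y = i then
                    (-1:ℚ) ^ (x :: a').length *
                      ((shuffles (x :: a').reverse b'').count σ' : ℚ)
                  else 0 := by
                rw [show (x :: a') ++ 0 :: (b'' ++ [y]) =
                  ((x :: a') ++ 0 :: b'') ++ [y] by simp]
                rcases eq_or_ne y i with hy | hy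
                · rw [if_pos hy, hy, mul_word_apply_last, ih (x :: a') b'']
                · rw [if_neg hy, mul_word_apply_ne _ hy]
              rw [hterm1, hterm2, count_shuffles_snoc, List.reverse_cons, List.length_cons]
              rcases eq_or_ne x i with hx | hx <;> rcases eq_or_ne y i with hy | hy
              · rw [if_pos hx, if_pos hy, if_pos hx, if_pos hy]
                push_cast
                ring
              · rw [if_pos hx, if_neg hy, if_pos hx, if_neg hy]
                push_cast
                ring
              · rw [if_neg hx, if_pos hy, if_neg hx, if_pos hy]
                push_cast
                ring
              · rw [if_neg hx, if_neg hy, if_neg hx, if_neg hy]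
                simp

end KKAux

namespace KKAux

variable {m : ℕ} [NeZero m]

open Submodule

/-- Span of the expansions of combs `Γ_{0σ}` over `σ` avoiding the letter `0`. -/
noncomputable def Espan (m : ℕ) [NeZero m] : Submodule ℚ (Wd m) :=
  Submodule.span ℚ {x | ∃ σ : List (Fin m), (0:Fin m) ∉ σ ∧ x = (comb σ).expand}

/-- The Kleiss–Kuijf relations, as a property of `w`. -/
def KKp (m : ℕ) [NeZero m] (w : Wd m) : Prop :=
  ∀ a b : List (Fin m),
    w.coeff (FreeMonoid.ofList (a ++ (0 : Fin m) :: b)) =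
      (-1 : ℚ) ^ a.length *
        ((shuffles a.reverse b).map
          (fun c => w.coeff (FreeMonoid.ofList ((0 : Fin m) :: c)))).sum

/-- The set of `w` satisfying the KK relations is a submodule. -/
noncomputable def KKsub (m : ℕ) [NeZero m] : Submodule ℚ (Wd m) where
  carrier := {w | KKp m w}
  zero_mem' := by
    intro a b
    simp [list_map_sum_zero]
  add_mem' := by
    intro x y hx hy a b
    simp only [wd_add_apply]
    rw [hx a b, hy a b, list_map_sum_add]
    ring
  smul_mem' := by
    intro q x hx a b
    simp only [wd_smul_apply]
    rw [hx a b, list_map_sum_mul]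
    ring

lemma kk_of_Espan {w : Wd m} (hw : w ∈ Espan m) : KKp m w := by
  have hle : Espan m ≤ KKsub m := by
    apply Submodule.span_le.2
    rintro x ⟨σ, hσ, rfl⟩
    intro a b
    have h1 : ∀ c : List (Fin m), (comb σ).expand.coeff (FreeMonoid.ofList ((0:Fin m) :: c)) =
        (if σ = c then (1:ℚ) else 0) := by
      intro c
      have := key σ hσ [] c
      simpa [count_singleton_list] using this
    simp only [h1]
    rw [list_sum_count, key σ hσ a b]
  exact hle hw

lemma comm_mem_Espan : ∀ (v : LieTree m), (0:Fin m) ∉ v.leaves →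
    ∀ σ : List (Fin m), (0:Fin m) ∉ σ →
      (comb σ).expand * v.expand - v.expand * (comb σ).expand ∈ Espan m := by
  intro v
  induction v with
  | leaf i =>
      intro hv σ hσ
      have hi : i ≠ 0 := by
        intro h; exact hv (by simp [LieTree.leaves, h])
      apply Submodule.subset_span
      refine ⟨σ ++ [i], by simp [hσ, Ne.symm hi], ?_⟩
      rw [expand_comb_append]
      rfl
  | node p q ihp ihq =>
      intro hv σ hσ
      have hvp : (0:Fin m) ∉ p.leaves := fun h => hv (by simp [LieTree.leaves, h])
      have hvq : (0:Fin m) ∉ q.leaves := fun h => hv (by simp [LieTree.leaves, h])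
      have hmap : ∀ (t : LieTree m), ((0:Fin m) ∉ t.leaves →
          ∀ τ : List (Fin m), (0:Fin m) ∉ τ →
          (comb τ).expand * t.expand - t.expand * (comb τ).expand ∈ Espan m) →
          (0:Fin m) ∉ t.leaves →
          ∀ u ∈ Espan m, u * t.expand - t.expand * u ∈ Espan m := by
        intro t iht ht u hu
        have hle : Espan m ≤
            Submodule.comap (LinearMap.mulRight ℚ t.expand - LinearMap.mulLeft ℚ t.expand)
              (Espan m) := by
          apply Submodule.span_le.2
          rintro x ⟨τ, hτ, rfl⟩
          simp only [Set.mem_preimage, SetLike.mem_coe, Submodule.mem_comap,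
            LinearMap.sub_apply, LinearMap.mulRight_apply, LinearMap.mulLeft_apply]
          exact iht ht τ hτ
        have := hle hu
        simpa using this
      have key1 : (comb σ).expand * p.expand - p.expand * (comb σ).expand ∈ Espan m :=
        ihp hvp σ hσ
      have key2 : (comb σ).expand * q.expand - q.expand * (comb σ).expand ∈ Espan m :=
        ihq hvq σ hσ
      have h1 := hmap q ihq hvq _ key1
      have h2 := hmap p ihp hvp _ key2
      have hid : (comb σ).expand * (p.expand * q.expand - q.expand * p.expand) -
          (p.expand * q.expand - q.expand * p.expand) * (comb σ).expand =
          (((comb σ).expand * p.expand - p.expand * (comb σ).expand) * q.expand -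
            q.expand * ((comb σ).expand * p.expand - p.expand * (comb σ).expand)) -
          (((comb σ).expand * q.expand - q.expand * (comb σ).expand) * p.expand -
            p.expand * ((comb σ).expand * q.expand - q.expand * (comb σ).expand)) := by
        noncomm_ring
      show (comb σ).expand * (p.expand * q.expand - q.expand * p.expand) -
          (p.expand * q.expand - q.expand * p.expand) * (comb σ).expand ∈ Espan m
      rw [hid]
      exact sub_mem h1 h2

lemma expand_mem_Espan : ∀ T : LieTree m, T.leaves.count 0 = 1 → T.expand ∈ Espan m := by
  intro T
  induction T with
  | leaf i =>
      intro h
      have : i = 0 := by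
        by_contra hne
        simp [LieTree.leaves, List.count_singleton', Ne.symm hne, hne] at h
      subst this
      exact Submodule.subset_span ⟨[], by simp, rfl⟩
  | node u v ihu ihv =>
      intro h
      rw [show (LieTree.node u v).leaves = u.leaves ++ v.leaves from rfl,
        List.count_append] at h
      have hmap : ∀ (t : LieTree m), (0:Fin m) ∉ t.leaves →
          ∀ z ∈ Espan m, z * t.expand - t.expand * z ∈ Espan m := by
        intro t ht z hz
        have hle : Espan m ≤
            Submodule.comap (LinearMap.mulRight ℚ t.expand - LinearMap.mulLeft ℚ t.expand)
              (Espan m) := by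
          apply Submodule.span_le.2
          rintro x ⟨τ, hτ, rfl⟩
          simp only [Set.mem_preimage, SetLike.mem_coe, Submodule.mem_comap,
            LinearMap.sub_apply, LinearMap.mulRight_apply, LinearMap.mulLeft_apply]
          exact comm_mem_Espan t ht τ hτ
        have := hle hz
        simpa using this
      rcases Nat.add_eq_one_iff.1 h with ⟨hu0, hv1⟩ | ⟨hu1, hv0⟩
      · -- count 0 u.leaves = 0, count 0 v.leaves = 1
        have hu : (0:Fin m) ∉ u.leaves := List.count_eq_zero.1 hu0
        have h1 : v.expand ∈ Espan m := ihv hv1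
        have h2 := hmap u hu _ h1
        have hid : (LieTree.node u v).expand =
            -(v.expand * u.expand - u.expand * v.expand) := by
          show u.expand * v.expand - v.expand * u.expand = _
          noncomm_ring
        rw [hid]
        exact neg_mem h2
      · have hv : (0:Fin m) ∉ v.leaves := List.count_eq_zero.1 hv0
        have h1 : u.expand ∈ Espan m := ihu hu1
        exact hmap v hv _ h1

/-! #### Support lemmas -/

/-- The submodule of elements vanishing at a given word. -/
noncomputable def vanishAt (g : FreeMonoid (Fin m)) : Submodule ℚ (Wd m) where
  carrier := {f | f.coeff g = 0}
  zero_mem' := rfl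
  add_mem' := by
    intro x y hx hy
    show (x + y).coeff g = 0
    rw [wd_add_apply, hx, hy, add_zero]
  smul_mem' := by
    intro q x hx
    show (q • x).coeff g = 0
    rw [wd_smul_apply, hx, mul_zero]

lemma wsub_apply_eq_zero {w : Wd m} (hw : w ∈ Wsub m) {l : List (Fin m)}
    (hl : ¬ l.Perm (List.finRange m)) : w.coeff (FreeMonoid.ofList l) = 0 := by
  have hle : Wsub m ≤ vanishAt (FreeMonoid.ofList l) := by
    apply Submodule.span_le.2
    rintro x ⟨l', hp, rfl⟩
    show (word l').coeff (FreeMonoid.ofList l) = 0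
    rw [word_apply, if_neg]
    intro hc
    exact hl (hc ▸ hp)
  exact hle hw

lemma expand_perm_of_ne_zero : ∀ (T : LieTree m) (l : List (Fin m)),
    T.expand.coeff (FreeMonoid.ofList l) ≠ 0 → l.Perm T.leaves := by
  intro T
  induction T with
  | leaf i =>
      intro l h
      show l.Perm [i]
      rw [show (LieTree.leaf i).expand = word [i] from rfl, word_apply] at h
      rcases eq_or_ne ([i] : List (Fin m)) l with he | hne
      · rw [← he]
      · rw [if_neg hne] at h
        exact absurd rfl h
  | node u v ihu ihv =>
      intro l h
      classical
      rw [show (LieTree.node u v).expand = u.expand * v.expand - v.expand * u.expand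
        from rfl, MonoidAlgebra.coeff_sub, Finsupp.sub_apply] at h
      have hne : (u.expand * v.expand).coeff (FreeMonoid.ofList l) ≠ 0 ∨
          (v.expand * u.expand).coeff (FreeMonoid.ofList l) ≠ 0 := by
        by_contra hcon
        push_neg at hcon
        rw [hcon.1, hcon.2, sub_zero] at h
        exact h rfl
      show l.Perm (u.leaves ++ v.leaves)
      rcases hne with h' | h'
      · have hm : FreeMonoid.ofList l ∈ (u.expand * v.expand).coeff.support :=
          Finsupp.mem_support_iff.2 h'
        have := MonoidAlgebra.support_coeff_mul_subset u.expand v.expand hm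
        rcases Finset.mem_mul.1 this with ⟨g1, hg1, g2, hg2, hg⟩
        have hp1 : (FreeMonoid.toList g1).Perm u.leaves :=
          ihu _ (by simpa using Finsupp.mem_support_iff.1 hg1)
        have hp2 : (FreeMonoid.toList g2).Perm v.leaves :=
          ihv _ (by simpa using Finsupp.mem_support_iff.1 hg2)
        have hl : l = FreeMonoid.toList g1 ++ FreeMonoid.toList g2 :=
          (congrArg FreeMonoid.toList hg).symm
        rw [hl]
        exact hp1.append hp2
      · have hm : FreeMonoid.ofList l ∈ (v.expand * u.expand).coeff.support :=
          Finsupp.mem_support_iff.2 h'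
        have := MonoidAlgebra.support_coeff_mul_subset v.expand u.expand hm
        rcases Finset.mem_mul.1 this with ⟨g1, hg1, g2, hg2, hg⟩
        have hp1 : (FreeMonoid.toList g1).Perm v.leaves :=
          ihv _ (by simpa using Finsupp.mem_support_iff.1 hg1)
        have hp2 : (FreeMonoid.toList g2).Perm u.leaves :=
          ihu _ (by simpa using Finsupp.mem_support_iff.1 hg2)
        have hl : l = FreeMonoid.toList g1 ++ FreeMonoid.toList g2 :=
          (congrArg FreeMonoid.toList hg).symm
        rw [hl]
        exact (hp1.append hp2).trans List.perm_append_comm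

lemma liesub_apply_eq_zero {z : Wd m} (hz : z ∈ LieSub m) {l : List (Fin m)}
    (hl : ¬ l.Perm (List.finRange m)) : z.coeff (FreeMonoid.ofList l) = 0 := by
  have hle : LieSub m ≤ vanishAt (FreeMonoid.ofList l) := by
    apply Submodule.span_le.2
    rintro x ⟨T, hT, rfl⟩
    show T.expand.coeff (FreeMonoid.ofList l) = 0
    by_contra hne
    exact hl ((expand_perm_of_ne_zero T l hne).trans hT)
  exact hle hz

/-! #### Assembly -/

lemma finRange_eq_cons (m : ℕ) [NeZero m] :
    List.finRange m = 0 :: (List.finRange m).tail := by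
  obtain ⟨k, rfl⟩ := Nat.exists_eq_succ_of_ne_zero (NeZero.ne m)
  rw [List.finRange_succ]
  rfl

lemma zero_not_mem_tail (m : ℕ) [NeZero m] : (0 : Fin m) ∉ (List.finRange m).tail := by
  have hnd := List.nodup_finRange m
  rw [finRange_eq_cons m] at hnd
  exact (List.nodup_cons.1 hnd).1

lemma main_thm (m : ℕ) [NeZero m] (w : Wd m) (hw : w ∈ Wsub m) :
    w ∈ LieSub m ↔
      ∀ a b : List (Fin m),
        w.coeff (FreeMonoid.ofList (a ++ (0 : Fin m) :: b)) =
          (-1 : ℚ) ^ a.length *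
            ((shuffles a.reverse b).map
              (fun c => w.coeff (FreeMonoid.ofList ((0 : Fin m) :: c)))).sum := by
  constructor
  · -- forward direction
    intro hLie
    have hle : LieSub m ≤ KKsub m := by
      apply Submodule.span_le.2
      rintro x ⟨T, hT, rfl⟩
      have hcount : T.leaves.count 0 = 1 := by
        rw [hT.count_eq]
        rw [finRange_eq_cons m, List.count_cons_self,
          List.count_eq_zero.2 (zero_not_mem_tail m)]
      have hE : T.expand ∈ Espan m := expand_mem_Espan T hcount
      exact kk_of_Espan hE
    exact hle hLie
  · -- backward direction
    intro hKK
    have hz : (∑ σ ∈ permsTail m, w.coeff (FreeMonoid.ofList ((0:Fin m) :: σ)) • (comb σ).expand)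
        ∈ LieSub m := by
      apply Submodule.sum_mem
      intro σ hσ
      apply Submodule.smul_mem
      apply Submodule.subset_span
      refine ⟨comb σ, ?_, rfl⟩
      rw [leaves_comb]
      have hp : σ.Perm (List.finRange m).tail :=
        List.mem_permutations.1 (List.mem_toFinset.1 hσ)
      rw [finRange_eq_cons m]
      exact hp.cons 0
    have hwz : w = ∑ σ ∈ permsTail m,
        w.coeff (FreeMonoid.ofList ((0:Fin m) :: σ)) • (comb σ).expand := by
      suffices hgen : ∀ l : List (Fin m), w.coeff (FreeMonoid.ofList l) =
          (∑ σ ∈ permsTail m,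
            w.coeff (FreeMonoid.ofList ((0:Fin m) :: σ)) • (comb σ).expand).coeff
            (FreeMonoid.ofList l) by
        apply MonoidAlgebra.ext
        apply Finsupp.ext
        intro g
        exact hgen (FreeMonoid.toList g)
      intro l
      rw [wd_sum_apply]
      by_cases hp : l.Perm (List.finRange m)
      · have h0 : (0:Fin m) ∈ l := hp.mem_iff.2 (List.mem_finRange 0)
        obtain ⟨a, b, rfl⟩ := List.append_of_mem h0
        have habp : (a ++ b).Perm (List.finRange m).tail := by
          have h1 : ((0:Fin m) :: (a ++ b)).Perm (0 :: (List.finRange m).tail) := by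
            refine (List.perm_middle.symm).trans ?_
            rw [← finRange_eq_cons m]
            exact hp
          exact h1.cons_inv
        have hsub : ∀ c ∈ shuffles a.reverse b, c ∈ permsTail m := by
          intro c hcmem
          have hcp : c.Perm (a.reverse ++ b) := mem_shuffles_perm _ _ _ hcmem
          have : c.Perm (List.finRange m).tail :=
            (hcp.trans ((a.reverse_perm.append_right b))).trans habp
          exact List.mem_toFinset.2 (List.mem_permutations.2 this)
        have hstep : ∑ σ ∈ permsTail m,
            (w.coeff (FreeMonoid.ofList ((0:Fin m) :: σ)) • (comb σ).expand).coeff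
              (FreeMonoid.ofList (a ++ 0 :: b)) =
            ∑ σ ∈ permsTail m, ((shuffles a.reverse b).count σ : ℚ) *
              ((-1:ℚ) ^ a.length * w.coeff (FreeMonoid.ofList ((0:Fin m) :: σ))) := by
          refine Finset.sum_congr rfl (fun σ hσ => ?_)
          have hpσ : σ.Perm (List.finRange m).tail :=
            List.mem_permutations.1 (List.mem_toFinset.1 hσ)
          have hσ0 : (0:Fin m) ∉ σ := fun hc => zero_not_mem_tail m (hpσ.mem_iff.1 hc)
          rw [wd_smul_apply, key σ hσ0 a b]
          ring
        rw [hstep, hKK a b,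
          sum_map_eq_sum_count (shuffles a.reverse b) (permsTail m) hsub _,
          Finset.mul_sum]
        refine Finset.sum_congr rfl (fun σ _ => ?_)
        ring
      · rw [wsub_apply_eq_zero hw hp]
        have h0 : (∑ σ ∈ permsTail m,
            w.coeff (FreeMonoid.ofList ((0:Fin m) :: σ)) • (comb σ).expand).coeff
            (FreeMonoid.ofList l) = 0 := liesub_apply_eq_zero hz hp
        rw [wd_sum_apply] at h0
        rw [h0]
    rw [hwz]
    exact hz

end KKAux

/-- Kleiss–Kuijf: `w ∈ W(n-1)` is a Lie polynomial iff for all words `a`, `b`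
(with `a` possibly empty), `(w, a1b) = (-1)^{|a|} (w, 1(ā ⧢ b))`. -/
theorem stmt6 (n : ℕ) [NeZero (n - 1)] (w : Wd (n - 1)) (hw : w ∈ Wsub (n - 1)) :
    w ∈ LieSub (n - 1) ↔
      ∀ a b : List (Fin (n - 1)),
        w.coeff (FreeMonoid.ofList (a ++ (0 : Fin (n - 1)) :: b)) =
          (-1 : ℚ) ^ a.length *
            ((shuffles a.reverse b).map
              (fun c => w.coeff (FreeMonoid.ofList ((0 : Fin (n - 1)) :: c)))).sum := by
  exact KKAux.main_thm (n - 1) w hw
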